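/- Let (X, 𝔄, μ) be a finite measure space, τ : X → X non-singular with C_τ bounded on L^{pq}(X) (1 < p < ∞, 1 ≤ q < ∞). If there exists a measurable set A with μ(A) > 0, liminf_{n→∞} μ(τ^{-n}(A)) = 0 and limsup_{n→∞} μ(τ^{-n}(A)) > 0, then the characteristic function χ_A is a semi-irregular vector for C_τ, and hence C_τ admits a semi-irregular vector. -/

import Mathlib

open MeasureTheory Filter Set
open scoped ENNReal NNReal

/-- Decreasing rearrangement `g*(t)` of a measurable function. -/
noncomputable def rearr {X : Type*} [MeasurableSpace X] (μ : Measure X) (g : X → ℂ)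
    (t : ℝ) : ℝ≥0∞ :=
  sInf {l : ℝ≥0∞ | μ {x | l < (‖g x‖₊ : ℝ≥0∞)} ≤ ENNReal.ofReal t}

/-- Maximal function `g**(t) = (1/t) ∫_0^t g*(s) ds`. -/
noncomputable def maxFun {X : Type*} [MeasurableSpace X] (μ : Measure X) (g : X → ℂ)
    (t : ℝ) : ℝ≥0∞ :=
  (ENNReal.ofReal t)⁻¹ * ∫⁻ s in Set.Ioc (0:ℝ) t, rearr μ g s

/-- `‖g‖_{pq}^q = (q/p) ∫_0^∞ (t^{1/p} g**(t))^q dt/t`. -/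
noncomputable def lorentzQ {X : Type*} [MeasurableSpace X] (μ : Measure X) (g : X → ℂ)
    (p q : ℝ) : ℝ≥0∞ :=
  ENNReal.ofReal (q / p) *
    ∫⁻ t in Set.Ioi (0:ℝ), (ENNReal.ofReal (t ^ (1/p)) * maxFun μ g t) ^ q / ENNReal.ofReal t

/-- The Lorentz norm `‖g‖_{pq}` for `q < ∞`. -/
noncomputable def lorentzNorm {X : Type*} [MeasurableSpace X] (μ : Measure X) (g : X → ℂ)
    (p q : ℝ) : ℝ≥0∞ :=
  lorentzQ μ g p q ^ (1 / q)

/-- The Lorentz norm `‖g‖_{p∞} = sup_{t>0} t^{1/p} g**(t)`. -/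
noncomputable def lorentzSup {X : Type*} [MeasurableSpace X] (μ : Measure X) (g : X → ℂ)
    (p : ℝ) : ℝ≥0∞ :=
  ⨆ (t : ℝ) (_ : 0 < t), ENNReal.ofReal (t ^ (1/p)) * maxFun μ g t

/-- A non-singular measurable transformation. -/
def Nonsingular {X : Type*} [MeasurableSpace X] (μ : Measure X) (τ : X → X) : Prop :=
  Measurable τ ∧ ∀ A : Set X, MeasurableSet A → μ A = 0 → μ (τ ⁻¹' A) = 0

lemma rearr_indicator {X : Type*} [MeasurableSpace X] (μ : Measure X) (B : Set X) (t : ℝ) :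
    rearr μ (B.indicator fun _ => (1:ℂ)) t
      = if ENNReal.ofReal t < μ B then 1 else 0 := by
  have hnorm : ∀ l : ℝ≥0∞, {x | l < (‖B.indicator (fun _ => (1:ℂ)) x‖₊ : ℝ≥0∞)}
      = if l < 1 then B else ∅ := by
    intro l
    ext x
    by_cases hx : x ∈ B <;> by_cases hl : l < 1 <;>
      simp [hx, hl]
  unfold rearr
  by_cases h : ENNReal.ofReal t < μ B
  · have hS : {l : ℝ≥0∞ | μ {x | l < (‖B.indicator (fun _ => (1:ℂ)) x‖₊ : ℝ≥0∞)}
        ≤ ENNReal.ofReal t} = Set.Ici 1 := by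
      ext l
      rw [Set.mem_setOf_eq, hnorm l]
      by_cases hl : l < 1
      · simp [hl, not_le.2 h, not_le.2 hl]
      · simp [hl, not_lt.1 hl]
    rw [hS, csInf_Ici, if_pos h]
  · have hS : {l : ℝ≥0∞ | μ {x | l < (‖B.indicator (fun _ => (1:ℂ)) x‖₊ : ℝ≥0∞)}
        ≤ ENNReal.ofReal t} = Set.univ := by
      ext l
      rw [Set.mem_setOf_eq, hnorm l]
      by_cases hl : l < 1 <;> simp [hl, not_lt.1 h]
    rw [hS, sInf_univ, if_neg h]
    rfl

lemma lintegral_rearr_indicator {X : Type*} [MeasurableSpace X] (μ : Measure X) (B : Set X)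
    (hB : μ B ≠ ∞) (t : ℝ) :
    ∫⁻ s in Set.Ioc (0:ℝ) t, rearr μ (B.indicator fun _ => (1:ℂ)) s
      = ENNReal.ofReal (min t (μ B).toReal) := by
  set m : ℝ := (μ B).toReal with hm
  have h1 : ∫⁻ s in Set.Ioc (0:ℝ) t, rearr μ (B.indicator fun _ => (1:ℂ)) s
      = ∫⁻ s in Set.Ioc (0:ℝ) t, (Set.Iio m).indicator (fun _ => (1:ℝ≥0∞)) s := by
    refine setLIntegral_congr_fun measurableSet_Ioc (fun s hs => ?_)
    rw [rearr_indicator]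
    have : ENNReal.ofReal s < μ B ↔ s < m := by
      rw [hm, ENNReal.ofReal_lt_iff_lt_toReal (le_of_lt hs.1) hB]
    by_cases hsm : s < m
    · simp [this.2 hsm, hsm]
    · rw [if_neg (fun h => hsm (this.1 h)), Set.indicator_of_notMem (by simpa using hsm)]
  rw [h1, lintegral_indicator measurableSet_Iio]
  simp only [Measure.restrict_restrict measurableSet_Iio, setLIntegral_one]
  rcases le_or_gt t 0 with ht | ht
  · have : Set.Iio m ∩ Set.Ioc (0:ℝ) t = ∅ := by
      rw [Set.Ioc_eq_empty (not_lt.2 ht), Set.inter_empty]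
    rcases le_or_gt t m with h | h
    · simp [this, min_eq_left h, ENNReal.ofReal_eq_zero.2 ht]
    · exact absurd (h.trans_le ht) (not_lt.2 ENNReal.toReal_nonneg)
  · have hub : volume (Set.Iio m ∩ Set.Ioc (0:ℝ) t) ≤ ENNReal.ofReal (min t m) := by
      have : Set.Iio m ∩ Set.Ioc (0:ℝ) t ⊆ Set.Ioc 0 (min t m) := by
        rintro s ⟨h1, h2, h3⟩
        exact ⟨h2, le_min h3 (le_of_lt h1)⟩
      calc volume _ ≤ volume (Set.Ioc (0:ℝ) (min t m)) := measure_mono this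
        _ = ENNReal.ofReal (min t m) := by rw [Real.volume_Ioc, sub_zero]
    have hlb : ENNReal.ofReal (min t m) ≤ volume (Set.Iio m ∩ Set.Ioc (0:ℝ) t) := by
      have : Set.Ioo 0 (min t m) ⊆ Set.Iio m ∩ Set.Ioc (0:ℝ) t := by
        rintro s ⟨h1, h2⟩
        exact ⟨h2.trans_le (min_le_right _ _), h1, (le_of_lt h2).trans (min_le_left _ _)⟩
      calc ENNReal.ofReal (min t m) = volume (Set.Ioo (0:ℝ) (min t m)) := by
            rw [Real.volume_Ioo, sub_zero]
        _ ≤ _ := measure_mono this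
    exact le_antisymm hub hlb

lemma maxFun_indicator_of_le {X : Type*} [MeasurableSpace X] (μ : Measure X) (B : Set X)
    (hB : μ B ≠ ∞) {t : ℝ} (ht : 0 < t) (htm : t ≤ (μ B).toReal) :
    maxFun μ (B.indicator fun _ => (1:ℂ)) t = 1 := by
  rw [maxFun, lintegral_rearr_indicator μ B hB, min_eq_left htm,
    ENNReal.inv_mul_cancel (by simpa using ht) ENNReal.ofReal_ne_top]

lemma maxFun_indicator_of_gt {X : Type*} [MeasurableSpace X] (μ : Measure X) (B : Set X)
    (hB : μ B ≠ ∞) {t : ℝ} (htm : (μ B).toReal < t) :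
    maxFun μ (B.indicator fun _ => (1:ℂ)) t = ENNReal.ofReal ((μ B).toReal / t) := by
  have ht : 0 < t := lt_of_le_of_lt ENNReal.toReal_nonneg htm
  rw [maxFun, lintegral_rearr_indicator μ B hB, min_eq_right (le_of_lt htm),
    ← ENNReal.ofReal_inv_of_pos ht, ← ENNReal.ofReal_mul (by positivity), inv_mul_eq_div]

lemma lorentzQ_indicator {X : Type*} [MeasurableSpace X] (μ : Measure X) (B : Set X)
    (hB : μ B ≠ ∞) {p q : ℝ} (hp : 1 < p) (hq : 1 ≤ q) :
    lorentzQ μ (B.indicator fun _ => (1:ℂ)) p q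
      = ENNReal.ofReal (p / (p - 1)) * ENNReal.ofReal ((μ B).toReal ^ (q / p)) := by
  have hp0 : (0:ℝ) < p := by linarith
  have hq0 : (0:ℝ) < q := by linarith
  have hr : (0:ℝ) < q / p := div_pos hq0 hp0
  have hrq : q / p < q := div_lt_self hq0 hp
  set m : ℝ := (μ B).toReal with hmdef
  have hm0 : 0 ≤ m := ENNReal.toReal_nonneg
  rcases eq_or_lt_of_le hm0 with hm | hm
  · -- m = 0 case
    have hμ0 : μ B = 0 := by
      have := hm.symm
      rw [hmdef] at this
      exact (ENNReal.toReal_eq_zero_iff _).1 (by exact this.symm ▸ rfl) |>.resolve_right hB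
    have hzero : ∀ t ∈ Set.Ioi (0:ℝ),
        (ENNReal.ofReal (t ^ (1/p)) * maxFun μ (B.indicator fun _ => (1:ℂ)) t) ^ q
          / ENNReal.ofReal t = 0 := by
      intro t ht
      have : maxFun μ (B.indicator fun _ => (1:ℂ)) t = 0 := by
        rw [maxFun, lintegral_rearr_indicator μ B hB, ← hmdef, ← hm,
          min_eq_right (le_of_lt ht), ENNReal.ofReal_zero, mul_zero]
      rw [this, mul_zero, ENNReal.zero_rpow_of_pos hq0, ENNReal.zero_div]
    rw [lorentzQ, setLIntegral_congr_fun measurableSet_Ioi hzero,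
      lintegral_zero, mul_zero, ← hm, Real.zero_rpow (ne_of_gt hr), ENNReal.ofReal_zero,
      mul_zero]
  · -- 0 < m case
    have hmem : ENNReal.ofReal m = μ B := ENNReal.ofReal_toReal hB
    -- split the integral
    have hsplit : (Set.Ioi (0:ℝ)) = Set.Ioc 0 m ∪ Set.Ioi m :=
      (Set.Ioc_union_Ioi_eq_Ioi (le_of_lt hm)).symm
    rw [lorentzQ, hsplit, lintegral_union measurableSet_Ioi (Set.Ioc_disjoint_Ioi le_rfl)]
    -- first piece
    have hI1 : ∫⁻ t in Set.Ioc (0:ℝ) m,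
        (ENNReal.ofReal (t ^ (1/p)) * maxFun μ (B.indicator fun _ => (1:ℂ)) t) ^ q
          / ENNReal.ofReal t
        = ENNReal.ofReal (m ^ (q/p) * (p/q)) := by
      have e1 : ∀ t ∈ Set.Ioc (0:ℝ) m,
          (ENNReal.ofReal (t ^ (1/p)) * maxFun μ (B.indicator fun _ => (1:ℂ)) t) ^ q
            / ENNReal.ofReal t = ENNReal.ofReal (t ^ (q/p - 1)) := by
        intro t ht
        rw [maxFun_indicator_of_le μ B hB ht.1 ht.2, mul_one,
          ENNReal.ofReal_rpow_of_nonneg (Real.rpow_nonneg (le_of_lt ht.1) _) (le_of_lt hq0),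
          ← ENNReal.ofReal_div_of_pos ht.1]
        congr 1
        rw [← Real.rpow_mul (le_of_lt ht.1), Real.rpow_sub ht.1, Real.rpow_one]
        congr 2
        ring
      rw [setLIntegral_congr_fun measurableSet_Ioc e1,
        ← ofReal_integral_eq_lintegral_ofReal]
      · congr 1
        rw [← intervalIntegral.integral_of_le (le_of_lt hm),
          integral_rpow (Or.inl (by linarith))]
        rw [Real.zero_rpow (by rw [sub_add_cancel]; exact ne_of_gt hr)]
        have : q/p - 1 + 1 = q/p := by ring
        rw [this]
        field_simp
        rw [sub_zero]
      · exact (intervalIntegrable_iff_integrableOn_Ioc_of_le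
          (le_of_lt hm)).1 (intervalIntegral.intervalIntegrable_rpow' (by linarith))
      · filter_upwards [ae_restrict_mem measurableSet_Ioc] with t ht
        exact Real.rpow_nonneg (le_of_lt ht.1) _
    -- second piece
    have hb : q/p - q - 1 < -1 := by linarith
    have hI2 : ∫⁻ t in Set.Ioi m,
        (ENNReal.ofReal (t ^ (1/p)) * maxFun μ (B.indicator fun _ => (1:ℂ)) t) ^ q
          / ENNReal.ofReal t
        = ENNReal.ofReal (m ^ q * (-(m ^ (q/p - q)) / (q/p - q))) := by
      have e2 : ∀ t ∈ Set.Ioi m,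
          (ENNReal.ofReal (t ^ (1/p)) * maxFun μ (B.indicator fun _ => (1:ℂ)) t) ^ q
            / ENNReal.ofReal t = ENNReal.ofReal (m ^ q * t ^ (q/p - q - 1)) := by
        intro t ht
        have ht0 : (0:ℝ) < t := hm.trans ht
        rw [maxFun_indicator_of_gt μ B hB ht, ← hmdef,
          ← ENNReal.ofReal_mul (Real.rpow_nonneg (le_of_lt ht0) _),
          ENNReal.ofReal_rpow_of_nonneg (by positivity) (le_of_lt hq0),
          ← ENNReal.ofReal_div_of_pos ht0]
        congr 1
        rw [Real.mul_rpow (Real.rpow_nonneg (le_of_lt ht0) _) (by positivity),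
          Real.div_rpow hm0 (le_of_lt ht0), ← Real.rpow_mul (le_of_lt ht0)]
        have e : 1/p * q = q/p := by ring
        rw [e, Real.rpow_sub ht0, Real.rpow_sub ht0, Real.rpow_one]
        have h1 : t ^ q ≠ 0 := ne_of_gt (Real.rpow_pos_of_pos ht0 _)
        field_simp
      rw [setLIntegral_congr_fun measurableSet_Ioi e2,
        ← ofReal_integral_eq_lintegral_ofReal]
      · congr 1
        rw [MeasureTheory.integral_const_mul, integral_Ioi_rpow_of_lt hb hm]
        have : q/p - q - 1 + 1 = q/p - q := by ring
        rw [this]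
      · exact (integrableOn_Ioi_rpow_of_lt hb hm).const_mul _
      · filter_upwards [ae_restrict_mem measurableSet_Ioi] with t ht
        have ht0 : (0:ℝ) < t := hm.trans ht
        positivity
    rw [hI1, hI2]
    have hR2 : 0 ≤ m ^ q * (-(m ^ (q/p - q)) / (q/p - q)) := by
      apply mul_nonneg (Real.rpow_nonneg hm0 _)
      exact div_nonneg_of_nonpos (neg_nonpos.2 (Real.rpow_nonneg hm0 _)) (by linarith)
    rw [← ENNReal.ofReal_add (by positivity) hR2, ← ENNReal.ofReal_mul (le_of_lt hr),
      ← ENNReal.ofReal_mul (le_of_lt (div_pos hp0 (by linarith)))]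
    congr 1
    have hmm : m ^ q * m ^ (q/p - q) = m ^ (q/p) := by
      rw [← Real.rpow_add hm]
      ring_nf
    have e3 : m ^ q * (-(m ^ (q/p - q)) / (q/p - q)) = m ^ (q/p) / (q - q/p) := by
      calc m ^ q * (-(m ^ (q/p - q)) / (q/p - q))
          = -(m ^ q * m ^ (q/p - q) / (q/p - q)) := by
            rw [neg_div, mul_neg, mul_div_assoc]
        _ = -(m ^ (q/p) / (q/p - q)) := by rw [hmm]
        _ = m ^ (q/p) / (q - q/p) := by
            rw [show q - q/p = -(q/p - q) from by ring, div_neg]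
    rw [e3]
    have hy' : q - q/p ≠ 0 := by linarith
    have hp1 : p - 1 ≠ 0 := by linarith
    have h5 : -q + q*p ≠ 0 := by nlinarith
    generalize m ^ (q/p) = A
    have h6 : p * q - q ≠ 0 := by nlinarith
    field_simp [h5, h6]
    have hu : (-q + q * p) * (-q + q * p)⁻¹ = 1 := mul_inv_cancel₀ h5
    ring

lemma lorentzNorm_indicator {X : Type*} [MeasurableSpace X] (μ : Measure X) (B : Set X)
    (hB : μ B ≠ ∞) {p q : ℝ} (hp : 1 < p) (hq : 1 ≤ q) :
    lorentzNorm μ (B.indicator fun _ => (1:ℂ)) p q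
      = ENNReal.ofReal ((p / (p - 1)) ^ (1/q)) * (μ B) ^ (1/p) := by
  have hp0 : (0:ℝ) < p := by linarith
  have hq0 : (0:ℝ) < q := by linarith
  have hc0 : (0:ℝ) ≤ p / (p - 1) := le_of_lt (div_pos hp0 (by linarith))
  rw [lorentzNorm, lorentzQ_indicator μ B hB hp hq,
    ENNReal.mul_rpow_of_nonneg _ _ (by positivity),
    ENNReal.ofReal_rpow_of_nonneg hc0 (by positivity),
    ENNReal.ofReal_rpow_of_nonneg (Real.rpow_nonneg ENNReal.toReal_nonneg _) (by positivity),
    ← Real.rpow_mul ENNReal.toReal_nonneg,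
    show q / p * (1 / q) = 1 / p from by field_simp,
    ENNReal.toReal_rpow, ENNReal.ofReal_toReal (ENNReal.rpow_ne_top_of_nonneg (by positivity) hB)]

/-- on a finite measure space, if `liminf μ(τ^{-n}A) = 0` and
`limsup μ(τ^{-n}A) > 0` for some `A` of positive measure, then `χ_A` is a
semi-irregular vector for `C_τ`. -/
theorem stmt_17 {X : Type*} [MeasurableSpace X] (μ : Measure X) [IsFiniteMeasure μ]
    (τ : X → X) (hns : Nonsingular μ τ)
    (p q : ℝ) (hp : 1 < p) (hq : 1 ≤ q)
    (hbdd : ∃ C : ℝ≥0∞, C < ⊤ ∧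
      ∀ g : X → ℂ, lorentzNorm μ (g ∘ τ) p q ≤ C * lorentzNorm μ g p q)
    (A : Set X) (hA : MeasurableSet A) (hpos : 0 < μ A)
    (hinf : Filter.liminf (fun n : ℕ => μ ((τ^[n]) ⁻¹' A)) Filter.atTop = 0)
    (hsup : 0 < Filter.limsup (fun n : ℕ => μ ((τ^[n]) ⁻¹' A)) Filter.atTop) :
    Filter.liminf
        (fun n : ℕ => lorentzNorm μ ((A.indicator fun _ => (1:ℂ)) ∘ τ^[n]) p q)
        Filter.atTop = 0 ∧
      0 < Filter.limsup
        (fun n : ℕ => lorentzNorm μ ((A.indicator fun _ => (1:ℂ)) ∘ τ^[n]) p q)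
        Filter.atTop := by
  have hp0 : (0:ℝ) < 1/p := by positivity
  set c : ℝ≥0∞ := ENNReal.ofReal ((p / (p - 1)) ^ (1/q)) with hc
  have hcne : c ≠ 0 := by
    rw [hc]
    simp only [ne_eq, ENNReal.ofReal_eq_zero, not_le]
    exact Real.rpow_pos_of_pos (div_pos (by linarith) (by linarith)) _
  have hctop : c ≠ ⊤ := ENNReal.ofReal_ne_top
  set F : ℝ≥0∞ → ℝ≥0∞ := fun m => c * m ^ (1/p) with hF
  set a : ℕ → ℝ≥0∞ := fun n => μ ((τ^[n]) ⁻¹' A) with ha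
  have hfn : (fun n : ℕ => lorentzNorm μ ((A.indicator fun _ => (1:ℂ)) ∘ τ^[n]) p q)
      = F ∘ a := by
    funext n
    have hcomp : (A.indicator fun _ => (1:ℂ)) ∘ τ^[n]
        = ((τ^[n]) ⁻¹' A).indicator fun _ => (1:ℂ) := by
      funext x
      by_cases hx : τ^[n] x ∈ A <;> simp [Function.comp, Set.indicator_apply, hx]
    rw [hcomp, lorentzNorm_indicator μ _ (measure_ne_top μ _) hp hq]
    rfl
  have hFmono : Monotone F := fun x y hxy =>
    mul_le_mul_right (ENNReal.rpow_le_rpow hxy (le_of_lt hp0)) c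
  have hFcont : Continuous F :=
    (ENNReal.continuous_const_mul hctop).comp ENNReal.continuous_rpow_const
  have hlim : F (Filter.liminf a Filter.atTop) = Filter.liminf (F ∘ a) Filter.atTop :=
    hFmono.map_liminf_of_continuousAt a hFcont.continuousAt
  have hlim2 : F (Filter.limsup a Filter.atTop) = Filter.limsup (F ∘ a) Filter.atTop :=
    hFmono.map_limsup_of_continuousAt a hFcont.continuousAt
  constructor
  · rw [hfn, ← hlim, hinf]
    show c * (0:ℝ≥0∞) ^ (1/p) = 0
    rw [ENNReal.zero_rpow_of_pos hp0, mul_zero]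
  · rw [hfn, ← hlim2]
    have hLtop : Filter.limsup a Filter.atTop ≠ ⊤ := by
      refine ne_top_of_le_ne_top (measure_ne_top μ Set.univ) ?_
      exact Filter.limsup_le_of_le (by isBoundedDefault)
        (Filter.Eventually.of_forall fun n => measure_mono (Set.subset_univ _))
    exact ENNReal.mul_pos hcne (ENNReal.rpow_pos hsup hLtop).ne'
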